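/- Let B ∈ ℝ^{n₁×n₂} and let A = [[0, B],[Bᵀ, 0]] ∈ ℝ^{(n₁+n₂)×(n₁+n₂)} be the associated Jordan–Wielandt matrix. For z ∈ {−1, +1}^{n₂} let z̃ = [0; z] ∈ ℝ^{n₁+n₂} (the lower partial Rademacher vector). Then 2 · (1/2^{n₂}) Σ_{z ∈ {−1,+1}^{n₂}} z̃ᵀ exp(A) z̃ + (n₁ − n₂) = tr(exp(A)). Similarly, for upper partial Rademacher vectors z̃ = [z; 0] with z ∈ {−1,+1}^{n₁}: 2 · (1/2^{n₁}) Σ_{z} z̃ᵀ exp(A) z̃ + (n₂ − n₁) = tr(exp(A)). Hence the corresponding stochastic trace estimators tr(exp(A))† = (2/N) Σ_{i=1}^N z̃ᵢᵀ exp(A) z̃ᵢ ± (n₁ − n₂) are unbiased. -/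

import Mathlib

open Matrix

/-- The `±1` sign vector encoded by a Boolean vector. -/
def radVec {n : ℕ} (s : Fin n → Bool) : Fin n → ℝ :=
  fun i => if s i then 1 else -1

lemma radVec_sq {n : ℕ} (s : Fin n → Bool) (i : Fin n) :
    radVec s i * radVec s i = 1 := by
  unfold radVec; split <;> norm_num

lemma rad_orth {n : ℕ} {i j : Fin n} (hij : i ≠ j) :
    ∑ s : Fin n → Bool, radVec s i * radVec s j = 0 := by
  apply Finset.sum_ninvolution (fun s => Function.update s i (!(s i)))
  · intro s
    have h1 : radVec (Function.update s i (!(s i))) i = - radVec s i := by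
      simp only [radVec, Function.update_self]
      cases s i <;> simp
    have h2 : radVec (Function.update s i (!(s i))) j = radVec s j := by
      simp only [radVec, Function.update_of_ne (Ne.symm hij)]
    rw [h1, h2]; ring
  · intro s hs h
    have := congrFun h i
    simp [Function.update_self] at this
  · intro s; exact Finset.mem_univ _
  · intro s
    funext k
    by_cases hk : k = i
    · subst hk; simp
    · simp [Function.update_of_ne hk]

lemma rad_avg {n : ℕ} (M : Matrix (Fin n) (Fin n) ℝ) :
    ∑ s : Fin n → Bool, radVec s ⬝ᵥ M.mulVec (radVec s) = 2 ^ n * M.trace := by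
  have hq : ∀ s : Fin n → Bool, radVec s ⬝ᵥ M.mulVec (radVec s)
      = ∑ i, ∑ j, radVec s i * radVec s j * M i j := by
    intro s
    simp only [dotProduct, mulVec, Finset.mul_sum]
    exact Finset.sum_congr rfl fun i _ => Finset.sum_congr rfl fun j _ => by ring
  calc ∑ s : Fin n → Bool, radVec s ⬝ᵥ M.mulVec (radVec s)
      = ∑ s : Fin n → Bool, ∑ i, ∑ j, radVec s i * radVec s j * M i j :=
        Finset.sum_congr rfl fun s _ => hq s
    _ = ∑ i, ∑ s : Fin n → Bool, ∑ j, radVec s i * radVec s j * M i j :=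
        Finset.sum_comm
    _ = ∑ i, ∑ j, ∑ s : Fin n → Bool, radVec s i * radVec s j * M i j :=
        Finset.sum_congr rfl fun i _ => Finset.sum_comm
    _ = ∑ i, ∑ j, (∑ s : Fin n → Bool, radVec s i * radVec s j) * M i j := by
        simp [Finset.sum_mul]
    _ = ∑ i, (2 : ℝ) ^ n * M i i := by
        refine Finset.sum_congr rfl fun i _ => ?_
        rw [Finset.sum_eq_single i]
        · have : (∑ s : Fin n → Bool, radVec s i * radVec s i) = 2 ^ n := by
            rw [Finset.sum_congr rfl fun s _ => radVec_sq s i]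
            simp [Finset.card_univ]
          rw [this]
        · intro j _ hji
          rw [rad_orth (Ne.symm hji), zero_mul]
        · intro h; exact absurd (Finset.mem_univ i) h
    _ = 2 ^ n * M.trace := by
        rw [Matrix.trace, Finset.mul_sum]
        rfl

lemma pow_even {n₁ n₂ : ℕ} (B : Matrix (Fin n₁) (Fin n₂) ℝ) (m : ℕ) :
    (Matrix.fromBlocks 0 B Bᵀ 0) ^ (2 * m)
      = Matrix.fromBlocks ((B * Bᵀ) ^ m) 0 0 ((Bᵀ * B) ^ m) := by
  induction m with
  | zero => simp [Matrix.fromBlocks_one]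
  | succ m ih =>
    have : 2 * (m + 1) = 2 * m + 1 + 1 := by ring
    rw [this, pow_succ, pow_succ, ih, Matrix.fromBlocks_multiply,
      Matrix.fromBlocks_multiply]
    simp [pow_succ, Matrix.mul_assoc]

lemma pow_odd {n₁ n₂ : ℕ} (B : Matrix (Fin n₁) (Fin n₂) ℝ) (m : ℕ) :
    (Matrix.fromBlocks 0 B Bᵀ 0) ^ (2 * m + 1)
      = Matrix.fromBlocks 0 ((B * Bᵀ) ^ m * B) ((Bᵀ * B) ^ m * Bᵀ) 0 := by
  rw [pow_succ, pow_even, Matrix.fromBlocks_multiply]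
  simp

/-- The difference of block traces, as a linear map. -/
def traceDiff (n₁ n₂ : ℕ) :
    Matrix (Fin n₁ ⊕ Fin n₂) (Fin n₁ ⊕ Fin n₂) ℝ →ₗ[ℝ] ℝ where
  toFun M := M.toBlocks₁₁.trace - M.toBlocks₂₂.trace
  map_add' M N := by
    simp [Matrix.toBlocks₁₁, Matrix.toBlocks₂₂, Matrix.trace, Matrix.diag,
      Finset.sum_add_distrib]
    ring
  map_smul' c M := by
    simp only [Matrix.toBlocks₁₁, Matrix.toBlocks₂₂, Matrix.trace, Matrix.diag,
      Matrix.of_apply, Matrix.smul_apply, smul_eq_mul, RingHom.id_apply]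
    rw [← Finset.mul_sum, ← Finset.mul_sum, mul_sub]

lemma BBt_pow {n₁ n₂ : ℕ} (B : Matrix (Fin n₁) (Fin n₂) ℝ) (l : ℕ) :
    (B * Bᵀ) ^ (l + 1) = B * ((Bᵀ * B) ^ l * Bᵀ) := by
  induction l with
  | zero => simp [Matrix.mul_assoc]
  | succ t ih =>
    rw [pow_succ', ih, pow_succ']
    simp only [Matrix.mul_assoc]

lemma traceDiff_pow {n₁ n₂ : ℕ} (B : Matrix (Fin n₁) (Fin n₂) ℝ) (k : ℕ) (hk : k ≠ 0) :
    traceDiff n₁ n₂ ((Matrix.fromBlocks 0 B Bᵀ 0) ^ k) = 0 := by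
  rcases Nat.even_or_odd k with ⟨m, hm⟩ | ⟨m, hm⟩
  · have hm' : k = 2 * m := by omega
    have hmpos : m ≠ 0 := by omega
    obtain ⟨l, rfl⟩ := Nat.exists_eq_succ_of_ne_zero hmpos
    rw [hm', pow_even]
    simp only [traceDiff, LinearMap.coe_mk, AddHom.coe_mk,
      Matrix.toBlocks_fromBlocks₁₁, Matrix.toBlocks_fromBlocks₂₂]
    rw [BBt_pow, Matrix.trace_mul_comm]
    rw [show (Bᵀ * B) ^ l * Bᵀ * B = (Bᵀ * B) ^ (l + 1) by rw [pow_succ, Matrix.mul_assoc]]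
    ring
  · rw [hm, pow_odd]
    simp [traceDiff, Matrix.toBlocks_fromBlocks₁₁, Matrix.toBlocks_fromBlocks₂₂]

lemma traceDiff_exp {n₁ n₂ : ℕ} (B : Matrix (Fin n₁) (Fin n₂) ℝ) :
    traceDiff n₁ n₂ (NormedSpace.exp (Matrix.fromBlocks 0 B Bᵀ 0))
      = (n₁ : ℝ) - (n₂ : ℝ) := by
  letI : SeminormedRing (Matrix (Fin n₁ ⊕ Fin n₂) (Fin n₁ ⊕ Fin n₂) ℝ) :=
    Matrix.linftyOpSemiNormedRing
  letI : NormedRing (Matrix (Fin n₁ ⊕ Fin n₂) (Fin n₁ ⊕ Fin n₂) ℝ) :=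
    Matrix.linftyOpNormedRing
  letI : NormedAlgebra ℝ (Matrix (Fin n₁ ⊕ Fin n₂) (Fin n₁ ⊕ Fin n₂) ℝ) :=
    Matrix.linftyOpNormedAlgebra
  set A := Matrix.fromBlocks 0 B Bᵀ 0 with hA
  have hsum : Summable fun k : ℕ => (k.factorial : ℝ)⁻¹ • A ^ k :=
    NormedSpace.expSeries_summable' A
  have hφcont : Continuous (traceDiff n₁ n₂) :=
    (traceDiff n₁ n₂).continuous_of_finiteDimensional
  let φ : Matrix (Fin n₁ ⊕ Fin n₂) (Fin n₁ ⊕ Fin n₂) ℝ →L[ℝ] ℝ :=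
    ⟨traceDiff n₁ n₂, hφcont⟩
  have hmap : φ (∑' k : ℕ, (k.factorial : ℝ)⁻¹ • A ^ k)
      = ∑' k : ℕ, φ ((k.factorial : ℝ)⁻¹ • A ^ k) := φ.map_tsum hsum
  rw [NormedSpace.exp_eq_tsum (𝕂 := ℝ)]
  have hco : traceDiff n₁ n₂ (∑' k : ℕ, (k.factorial : ℝ)⁻¹ • A ^ k)
      = φ (∑' k : ℕ, (k.factorial : ℝ)⁻¹ • A ^ k) := rfl
  rw [hco, hmap]
  have hterm : ∀ k : ℕ,
      φ ((k.factorial : ℝ)⁻¹ • A ^ k) = if k = 0 then (n₁ : ℝ) - n₂ else 0 := by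
    intro k
    rcases eq_or_ne k 0 with rfl | hk
    · show traceDiff n₁ n₂ ((Nat.factorial 0 : ℝ)⁻¹ • A ^ 0) = _
      rw [pow_zero]
      simp [traceDiff, Matrix.toBlocks₁₁, Matrix.toBlocks₂₂, Matrix.trace,
        Matrix.diag, Matrix.one_apply]
    · have : φ ((k.factorial : ℝ)⁻¹ • A ^ k)
          = (k.factorial : ℝ)⁻¹ • traceDiff n₁ n₂ (A ^ k) := map_smul φ _ _
      rw [this, hA, traceDiff_pow B k hk]
      simp [hk]
  rw [tsum_congr hterm, tsum_ite_eq]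

/-- unbiasedness, rectangular case: for the Jordan–Wielandt matrix
`A = [[0,B],[Bᵀ,0]]` with `B ∈ ℝ^{n₁×n₂}`, the averages of the doubled quadratic
forms over lower partial Rademacher vectors `[0; z]` (resp. upper `[z; 0]`)
corrected by `n₁ - n₂` (resp. `n₂ - n₁`) equal `tr(exp A)`; hence the estimators
`(2/N) Σ z̃ᵢᵀ exp(A) z̃ᵢ ± (n₁ - n₂)` are unbiased. -/
theorem partial_rademacher_unbiased_rectangular
    {n₁ n₂ : ℕ} (B : Matrix (Fin n₁) (Fin n₂) ℝ)
    (A : Matrix (Fin n₁ ⊕ Fin n₂) (Fin n₁ ⊕ Fin n₂) ℝ)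
    (hA : A = Matrix.fromBlocks 0 B Bᵀ 0) :
    2 * ((1 / 2 ^ n₂) * ∑ s : Fin n₂ → Bool,
        Sum.elim 0 (radVec s) ⬝ᵥ (NormedSpace.exp A).mulVec (Sum.elim 0 (radVec s)))
        + ((n₁ : ℝ) - (n₂ : ℝ))
      = (NormedSpace.exp A).trace ∧
    2 * ((1 / 2 ^ n₁) * ∑ s : Fin n₁ → Bool,
        Sum.elim (radVec s) 0 ⬝ᵥ (NormedSpace.exp A).mulVec (Sum.elim (radVec s) 0))
        + ((n₂ : ℝ) - (n₁ : ℝ))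
      = (NormedSpace.exp A).trace := by
  subst hA
  set A := Matrix.fromBlocks 0 B Bᵀ 0 with hA
  set D := NormedSpace.exp A with hD
  have htr : D.trace = D.toBlocks₁₁.trace + D.toBlocks₂₂.trace := by
    simp [Matrix.trace, Matrix.diag, Matrix.toBlocks₁₁, Matrix.toBlocks₂₂,
      Fintype.sum_sum_type]
  have hdiff : D.toBlocks₁₁.trace - D.toBlocks₂₂.trace = (n₁ : ℝ) - n₂ :=
    traceDiff_exp B
  have hlow : ∀ s : Fin n₂ → Bool,
      Sum.elim 0 (radVec s) ⬝ᵥ D.mulVec (Sum.elim 0 (radVec s))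
        = radVec s ⬝ᵥ D.toBlocks₂₂.mulVec (radVec s) := by
    intro s
    simp [dotProduct, mulVec, Matrix.toBlocks₂₂, Fintype.sum_sum_type]
  have hup : ∀ s : Fin n₁ → Bool,
      Sum.elim (radVec s) 0 ⬝ᵥ D.mulVec (Sum.elim (radVec s) 0)
        = radVec s ⬝ᵥ D.toBlocks₁₁.mulVec (radVec s) := by
    intro s
    simp [dotProduct, mulVec, Matrix.toBlocks₁₁, Fintype.sum_sum_type]
  have h2 : (∑ s : Fin n₂ → Bool,
      Sum.elim 0 (radVec s) ⬝ᵥ D.mulVec (Sum.elim 0 (radVec s)))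
        = 2 ^ n₂ * D.toBlocks₂₂.trace := by
    rw [Finset.sum_congr rfl fun s _ => hlow s, rad_avg]
  have h1 : (∑ s : Fin n₁ → Bool,
      Sum.elim (radVec s) 0 ⬝ᵥ D.mulVec (Sum.elim (radVec s) 0))
        = 2 ^ n₁ * D.toBlocks₁₁.trace := by
    rw [Finset.sum_congr rfl fun s _ => hup s, rad_avg]
  have hp2 : (2 : ℝ) ^ n₂ ≠ 0 := by positivity
  have hp1 : (2 : ℝ) ^ n₁ ≠ 0 := by positivity
  constructor
  · rw [h2, htr]
    field_simp
    linarith [hdiff]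
  · rw [h1, htr]
    field_simp
    linarith [hdiff]
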